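/- Let G be a finite group and L an involutive anti-automorphism of G such that χ(L(g)) = χ(g) for every irreducible complex character χ and every g ∈ G. Then the class function g ↦ |{h ∈ G : h⁻¹L(h) = g}| equals Σ_k ε_k χ_k(g) where each coefficient ε_k is ±1. -/

import Mathlib

open CategoryTheory

open LinearMap in
theorem trace_map_comm {V : Type} [AddCommGroup V] [Module ℂ V] [FiniteDimensional ℂ V]
    (f g : V →ₗ[ℂ] V) :
    trace ℂ _ ((TensorProduct.map f g) ∘ₗ (TensorProduct.comm ℂ V V).toLinearMap)
      = trace ℂ V (f ∘ₗ g) := by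
  classical
  let b := Module.Free.chooseBasis ℂ V
  rw [trace_eq_matrix_trace ℂ (b.tensorProduct b), trace_eq_matrix_trace ℂ b,
    Matrix.trace, Matrix.trace]
  simp only [Matrix.diag_apply, LinearMap.toMatrix_apply]
  rw [Fintype.sum_prod_type]
  have key : ∀ i, ∑ j, (b.tensorProduct b).repr
      (((TensorProduct.map f g) ∘ₗ (TensorProduct.comm ℂ V V).toLinearMap)
        ((b.tensorProduct b) (i, j))) (i, j)
      = b.repr ((f ∘ₗ g) (b i)) i := by
    intro i
    have : ∀ j, ((b.tensorProduct b).repr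
        (((TensorProduct.map f g) ∘ₗ (TensorProduct.comm ℂ V V).toLinearMap)
          ((b.tensorProduct b) (i, j)))) (i, j)
        = b.repr (f (b j)) i * b.repr (g (b i)) j := by
      intro j
      rw [Module.Basis.tensorProduct_apply]
      simp only [LinearMap.comp_apply, LinearEquiv.coe_coe, TensorProduct.comm_tmul,
        TensorProduct.map_tmul, Module.Basis.tensorProduct_repr_tmul_apply, smul_eq_mul]
      ring
    rw [Finset.sum_congr rfl fun j _ => this j]
    have hg : g (b i) = ∑ j, b.repr (g (b i)) j • b j := (b.sum_repr (g (b i))).symm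
    calc ∑ j, b.repr (f (b j)) i * b.repr (g (b i)) j
        = b.repr (f (∑ j, b.repr (g (b i)) j • b j)) i := by
          rw [map_sum]; simp only [map_smul, map_sum, Finsupp.coe_smul, Pi.smul_apply,
            smul_eq_mul, Finsupp.coe_finset_sum, Finset.sum_apply]
          exact Finset.sum_congr rfl fun j _ => mul_comm _ _
      _ = b.repr ((f ∘ₗ g) (b i)) i := by rw [← hg]; rfl
  exact Finset.sum_congr rfl fun i _ => key i

open LinearMap in
open scoped Classical in
theorem myorth {G : Type} [Group G] [Fintype G] (V W : FDRep ℂ G) [Simple V] [Simple W]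
    (hc : (Fintype.card G : ℂ) ≠ 0) :
    (Fintype.card G : ℂ)⁻¹ * ∑ g : G, V.character g * W.character g⁻¹ =
      if Nonempty (V ≅ W) then 1 else 0 := by
  have h := FDRep.char_orthonormal (k := ℂ) V W
  rw [Nat.card_eq_fintype_card] at h
  exact_mod_cast h

open LinearMap in
theorem partA {G : Type} [Group G] [Fintype G] (V : FDRep ℂ G) [Simple V]
    (L : G → G) (hanti : ∀ g h : G, L (g * h) = L h * L g) (hinv : ∀ g : G, L (L g) = g)
    (hL : ∀ g, V.character (L g) = V.character g) :
    let ε := (Fintype.card G : ℂ)⁻¹ * ∑ h : G, V.character ((L h)⁻¹ * h)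
    ε = 1 ∨ ε = -1 := by
  classical
  intro ε
  have hc : (Fintype.card G : ℂ) ≠ 0 := Nat.cast_ne_zero.2 Fintype.card_ne_zero
  have hL1 : L 1 = 1 := by
    have h1 : L 1 * L 1 = L 1 := by rw [← hanti 1 1, mul_one]
    exact mul_eq_right.1 h1
  have hLinv : ∀ g : G, L g⁻¹ = (L g)⁻¹ := by
    intro g
    have : L g⁻¹ * L g = 1 := by rw [← hanti g g⁻¹, mul_inv_cancel, hL1]
    exact eq_inv_of_mul_eq_one_left this
  let σ : G → G := fun g => (L g)⁻¹
  have hσmul : ∀ g h, σ (g * h) = σ g * σ h := by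
    intro g h; simp only [σ, hanti, mul_inv_rev]
  have hσσ : ∀ g, σ (σ g) = g := by
    intro g; simp only [σ, ← hLinv, hinv, inv_inv]
  have hχσ : ∀ g, V.character (σ g) = V.character g⁻¹ := by
    intro g; show V.character (L g)⁻¹ = _; rw [← hLinv, hL]
  -- the operators
  let E := TensorProduct ℂ V V
  let t : G → (E →ₗ[ℂ] E) := fun g => TensorProduct.map (V.ρ (σ g)) (V.ρ g)
  have htmul : ∀ g h, t g * t h = t (g * h) := by
    intro g h
    show TensorProduct.map _ _ ∘ₗ TensorProduct.map _ _ = _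
    rw [← TensorProduct.map_comp, ← Module.End.mul_eq_comp, ← Module.End.mul_eq_comp,
      ← map_mul, ← map_mul, ← hσmul]
  have httr : ∀ g, trace ℂ E (t g) = V.character (σ g) * V.character g := fun g =>
    trace_tensorProduct' (V.ρ (σ g)) (V.ρ g)
  let s : E →ₗ[ℂ] E := (TensorProduct.comm ℂ V V).toLinearMap
  have hst : ∀ g, s * t g = TensorProduct.map (V.ρ g) (V.ρ (σ g)) * s := by
    intro g; apply TensorProduct.ext'; intro x y; rfl
  have hss : s * s = 1 := by
    apply TensorProduct.ext'; intro x y; rfl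
  let T : E →ₗ[ℂ] E := ∑ g : G, t g
  have hTT : T * T = (Fintype.card G : ℂ) • T := by
    show (∑ g : G, t g) * (∑ h : G, t h) = _
    rw [Finset.sum_mul_sum]
    have : ∀ g : G, ∑ h : G, t g * t h = T := by
      intro g
      rw [Finset.sum_congr rfl fun h _ => htmul g h]
      exact Fintype.sum_equiv (Equiv.mulLeft g) _ _ fun h => rfl
    rw [Finset.sum_congr rfl fun g _ => this g, Finset.sum_const, Finset.card_univ,
      Nat.cast_smul_eq_nsmul ℂ]
  have hsT : s * T = T * s := by
    show s * (∑ g : G, t g) = (∑ g : G, t g) * s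
    rw [Finset.mul_sum, Finset.sum_mul]
    rw [Finset.sum_congr rfl fun g _ => hst g]
    apply Fintype.sum_equiv (Function.Involutive.toPerm σ hσσ)
    intro g
    show _ = TensorProduct.map (V.ρ (σ (σ g))) (V.ρ (σ g)) * s
    rw [hσσ]
  let Q : E →ₗ[ℂ] E := (Fintype.card G : ℂ)⁻¹ • T
  have hQQ : Q * Q = Q := by
    show ((Fintype.card G : ℂ)⁻¹ • T) * ((Fintype.card G : ℂ)⁻¹ • T) = _
    rw [smul_mul_assoc, mul_smul_comm, hTT, smul_smul, smul_smul]
    congr 1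
    field_simp
  have hsQ : s * Q = Q * s := by
    show s * ((Fintype.card G : ℂ)⁻¹ • T) = ((Fintype.card G : ℂ)⁻¹ • T) * s
    rw [mul_smul_comm, smul_mul_assoc, hsT]
  have htrQ : trace ℂ E Q = 1 := by
    show trace ℂ E ((Fintype.card G : ℂ)⁻¹ • T) = 1
    rw [map_smul, map_sum]
    rw [Finset.sum_congr rfl fun g _ => httr g]
    have h2 : ∀ g : G, V.character (σ g) * V.character g
        = V.character g * V.character g⁻¹ := by
      intro g; rw [hχσ, mul_comm]
    rw [Finset.sum_congr rfl fun g _ => h2 g, smul_eq_mul,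
      myorth V V hc, if_pos ⟨Iso.refl _⟩]
  let P : E →ₗ[ℂ] E := Q * s
  have hPQ : P * Q = P := by
    show Q * s * Q = Q * s
    rw [mul_assoc, hsQ, ← mul_assoc, hQQ]
  have hPP : P * P = Q := by
    show Q * s * (Q * s) = Q
    rw [← mul_assoc]
    have : Q * s * Q = Q * s := hPQ
    rw [this, mul_assoc, hss, mul_one]
  have htrP : trace ℂ E P = ε := by
    show trace ℂ E (((Fintype.card G : ℂ)⁻¹ • T) * s) = ε
    rw [smul_mul_assoc, map_smul, Finset.sum_mul, map_sum]
    have h3 : ∀ g : G, trace ℂ E (t g * s) = V.character ((L g)⁻¹ * g) := by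
      intro g
      have : trace ℂ E (t g * s) = trace ℂ _ (V.ρ (σ g) ∘ₗ V.ρ g) :=
        trace_map_comm (V.ρ (σ g)) (V.ρ g)
      rw [this, ← Module.End.mul_eq_comp, ← map_mul]
      rfl
    rw [Finset.sum_congr rfl fun g _ => h3 g, smul_eq_mul]
  -- projection, rank 1
  have hproj : IsProj (LinearMap.range Q) Q := by
    constructor
    · intro x; exact LinearMap.mem_range_self Q x
    · rintro x ⟨y, rfl⟩
      show (Q * Q) y = Q y
      rw [hQQ]
  have hrank : Module.finrank ℂ (LinearMap.range Q) = 1 := by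
    have := hproj.trace
    rw [htrQ] at this
    exact_mod_cast this.symm
  rw [finrank_eq_one_iff'] at hrank
  obtain ⟨v, hv0, hvspan⟩ := hrank
  set w : E := (v : E) with hwdef
  have hw0 : w ≠ 0 := fun h => hv0 (Subtype.ext h)
  have hQw : Q w = w := hproj.map_id _ v.2
  have hPw_mem : P w ∈ LinearMap.range Q := by
    show (Q * s) w ∈ _
    exact LinearMap.mem_range_self Q (s w)
  obtain ⟨cc, hcc⟩ := hvspan ⟨P w, hPw_mem⟩
  have hccw : P w = cc • w := by
    have := congrArg (Subtype.val) hcc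
    exact this.symm
  have hcc2 : cc * cc = 1 := by
    have h1 : (cc * cc) • w = w := by
      have h0 : P (P w) = w := by
        show (P * P) w = w
        rw [hPP, hQw]
      rw [hccw, map_smul, hccw, smul_smul] at h0
      exact h0
    by_contra hne
    have h2 : (cc * cc - 1) • w = 0 := by
      rw [sub_smul, one_smul, h1, sub_self]
    rcases smul_eq_zero.1 h2 with h | h
    · exact hne (sub_eq_zero.1 h)
    · exact hw0 h
  have hPccQ : P = cc • Q := by
    refine LinearMap.ext fun x => ?_
    show P x = (cc • Q) x
    have h4 : P (Q x) = P x := by show (P * Q) x = P x; rw [hPQ]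
    obtain ⟨d, hd⟩ := hvspan ⟨Q x, LinearMap.mem_range_self Q x⟩
    have hdw : Q x = d • w := (congrArg Subtype.val hd).symm
    rw [LinearMap.smul_apply, ← h4, hdw, map_smul, hccw, smul_smul, smul_smul, mul_comm]
  have hfin : ε = cc := by
    rw [← htrP, hPccQ, map_smul, htrQ, smul_eq_mul, mul_one]
  rw [hfin]
  exact mul_self_eq_one_iff.1 hcc2

section PartB
variable {G : Type} [Group G]

noncomputable def subrep (Y : FDRep ℂ G) (p : Submodule ℂ Y)
    (hp : ∀ (g : G) (x : Y), x ∈ p → Y.ρ g x ∈ p) : FDRep ℂ G :=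
  FDRep.of {
    toFun := fun g => (Y.ρ g).restrict (p := p) (q := p) (fun x hx => hp g x hx)
    map_one' := by
      refine LinearMap.ext fun x => Subtype.ext ?_
      simp [LinearMap.restrict_apply]
    map_mul' := by
      intro g h
      refine LinearMap.ext fun x => Subtype.ext ?_
      simp [LinearMap.restrict_apply] }

noncomputable def subrepι (Y : FDRep ℂ G) (p : Submodule ℂ Y)
    (hp : ∀ (g : G) (x : Y), x ∈ p → Y.ρ g x ∈ p) : subrep Y p hp ⟶ Y where
  hom := FGModuleCat.ofHom p.subtype
  comm := by
    intro g
    ext x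
    rfl

theorem fdRep_simple_of (V : FDRep ℂ G)
    (hnt : Nontrivial V)
    (hsimp : ∀ p : Submodule ℂ V, (∀ (g : G) (x : V), x ∈ p → V.ρ g x ∈ p) → p = ⊥ ∨ p = ⊤) :
    Simple V := by
  constructor
  intro Y f hmono
  constructor
  · intro hiso hf0
    obtain ⟨x, y, hxy⟩ := hnt
    obtain ⟨ginv, hg1, hg2⟩ := hiso.out
    rw [hf0, Limits.comp_zero] at hg2
    have hz : ∀ z : V, z = 0 := by
      intro z
      calc z = (𝟙 V : V ⟶ V).hom z := rfl
        _ = (0 : V ⟶ V).hom z := by rw [← hg2]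
        _ = 0 := by rw [Action.zero_hom]; rfl
    exact hxy ((hz x).trans (hz y).symm)
  · intro hf0
    have hfhom0 : f.hom ≠ 0 := by
      intro h
      apply hf0
      apply Action.hom_ext
      rw [Action.zero_hom]
      exact h
    have hker : LinearMap.ker f.hom.hom.hom = ⊥ := by
      have hstab : ∀ (g : G) (x : Y), x ∈ LinearMap.ker f.hom.hom.hom →
          Y.ρ g x ∈ LinearMap.ker f.hom.hom.hom := by
        intro g x hx
        have h1 : f.hom (Y.ρ g x) = V.ρ g (f.hom x) := congrArg (fun φ => φ x) (f.comm g)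
        have hx' : f.hom x = 0 := hx
        show f.hom (Y.ρ g x) = 0
        rw [h1, hx', map_zero]
      let ι := subrepι Y _ hstab
      have h0 : ι ≫ f = (0 : subrep Y _ hstab ⟶ Y) ≫ f := by
        rw [Limits.zero_comp]
        apply Action.hom_ext
        ext x
        rw [Action.zero_hom]
        exact x.2
      have hι := (cancel_mono f).1 h0
      rw [eq_bot_iff]
      intro x hx
      have h2 : (subrepι Y _ hstab).hom ⟨x, hx⟩ = (0 : subrep Y _ hstab ⟶ Y).hom ⟨x, hx⟩ :=
        congrArg (fun φ => φ.hom ⟨x, hx⟩) hι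
      rw [Action.zero_hom] at h2
      have : x = 0 := h2
      simp [this]
    have hinj : Function.Injective f.hom := by
      rw [← LinearMap.ker_eq_bot]; exact hker
    have hsurj : Function.Surjective f.hom := by
      have hstab : ∀ (g : G) (x : V), x ∈ LinearMap.range f.hom.hom.hom →
          V.ρ g x ∈ LinearMap.range f.hom.hom.hom := by
        rintro g x ⟨y, rfl⟩
        have h : f.hom (Y.ρ g y) = V.ρ g (f.hom y) := congrArg (fun φ => φ y) (f.comm g)
        exact ⟨Y.ρ g y, h⟩
      rcases hsimp _ hstab with h | h
      · exfalso
        apply hfhom0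
        ext x
        have : f.hom x ∈ LinearMap.range f.hom.hom.hom := ⟨x, rfl⟩
        rw [h] at this
        exact (by simpa using this : f.hom x = 0)
      · rw [← LinearMap.range_eq_top]; exact h
    let e : Y ≃ₗ[ℂ] V := LinearEquiv.ofBijective f.hom.hom.hom ⟨hinj, hsurj⟩
    let ginv : V ⟶ Y := {
      hom := FGModuleCat.ofHom e.symm.toLinearMap
      comm := by
        intro g
        ext x
        show e.symm (V.ρ g x) = Y.ρ g (e.symm x)
        apply hinj
        show f.hom (e.symm (V.ρ g x)) = f.hom (Y.ρ g (e.symm x))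
        have h1 : ∀ z, f.hom (e.symm z) = z := fun z => e.apply_symm_apply z
        rw [h1]
        have h2 : f.hom (Y.ρ g (e.symm x)) = V.ρ g (f.hom (e.symm x)) :=
          congrArg (fun φ => φ (e.symm x)) (f.comm g)
        rw [h2, h1] }
    refine ⟨⟨ginv, ?_, ?_⟩⟩
    · apply Action.hom_ext
      ext x
      show e.symm (f.hom x) = x
      exact e.symm_apply_apply x
    · apply Action.hom_ext
      ext x
      show f.hom (e.symm x) = x
      exact e.apply_symm_apply x

open LinearMap in
set_option maxHeartbeats 1000000 in
theorem partB [Fintype G] (f : G → ℂ)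
    (hclass : ∀ g y : G, f (g * y * g⁻¹) = f y)
    (hvan : ∀ V : FDRep ℂ G, Simple V → ∑ g : G, f g * V.character g⁻¹ = 0) :
    ∀ y : G, f y = 0 := by
  classical
  have hc : (Fintype.card G : ℂ) ≠ 0 := Nat.cast_ne_zero.2 Fintype.card_ne_zero
  haveI : NeZero (Fintype.card G : ℂ) := ⟨hc⟩
  set A := MonoidAlgebra ℂ G with hA
  haveI : Module.Finite ℂ A := by
    infer_instance
  set a : A := ∑ g : G, f g • MonoidAlgebra.single g⁻¹ (1 : ℂ) with ha
  -- a commutes with group elements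
  have haC : ∀ g : G, MonoidAlgebra.single g (1 : ℂ) * a = a * MonoidAlgebra.single g (1 : ℂ) := by
    intro g
    rw [ha, Finset.mul_sum, Finset.sum_mul]
    refine Fintype.sum_equiv ((Equiv.mulLeft g).trans (Equiv.mulRight g⁻¹)) _ _ ?_
    intro y
    show MonoidAlgebra.single g 1 * (f y • MonoidAlgebra.single y⁻¹ 1)
        = (f (g * y * g⁻¹) • MonoidAlgebra.single (g * y * g⁻¹)⁻¹ 1) * MonoidAlgebra.single g 1
    rw [hclass, mul_smul_comm, smul_mul_assoc, MonoidAlgebra.single_mul_single,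
      MonoidAlgebra.single_mul_single]
    have hgy : (g * y * g⁻¹)⁻¹ * g = g * y⁻¹ := by group
    rw [hgy]
  have hcentral : ∀ b : A, a * b = b * a := by
    intro b
    refine MonoidAlgebra.induction_on (motive := fun b => a * b = b * a) b (fun g => (haC g).symm) ?_ ?_
    · intro u v hu hv
      rw [mul_add, add_mul, hu, hv]
    · intro r u hu
      rw [mul_smul_comm, smul_mul_assoc, hu]
  -- a kills every simple submodule
  have hkill : ∀ W : Submodule A A, IsSimpleModule A ↥W → ∀ x : A, x ∈ W → a * x = 0 := by
    intro W hW x hxW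
    haveI : FiniteDimensional ℂ ↥W := by
      change FiniteDimensional ℂ ↥(W.restrictScalars ℂ)
      infer_instance
    let ρW : Representation ℂ G ↥W := {
      toFun := fun g => {
        toFun := fun w => (MonoidAlgebra.of ℂ G g : A) • w
        map_add' := fun u v => smul_add _ u v
        map_smul' := fun c u => by
          apply Subtype.ext
          simp only [SetLike.val_smul, SetLike.val_smul_of_tower]
          exact smul_comm _ _ _ }
      map_one' := by
        refine LinearMap.ext fun w => ?_
        show (MonoidAlgebra.of ℂ G 1 : A) • w = w
        rw [map_one, one_smul]
      map_mul' := by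
        intro g h
        refine LinearMap.ext fun w => ?_
        show (MonoidAlgebra.of ℂ G (g * h) : A) • w = (MonoidAlgebra.of ℂ G g : A) • ((MonoidAlgebra.of ℂ G h : A) • w)
        rw [map_mul, mul_smul] }
    let VW : FDRep ℂ G := FDRep.of ρW
    haveI hnt : Nontrivial ↥W := IsSimpleModule.nontrivial A ↥W
    haveI hVWs : Simple VW := by
      apply fdRep_simple_of
      · exact hnt
      · intro p hp
        let p₀ : Submodule ℂ ↥W := p
        have hp₀ : ∀ (g : G) (w : ↥W), w ∈ p₀ → ((MonoidAlgebra.of ℂ G g : A) • w) ∈ p₀ :=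
          fun g w hw => hp g w hw
        let p' : Submodule A ↥W := {
          carrier := (p₀ : Set ↥W)
          add_mem' := fun hu hv => p.add_mem hu hv
          zero_mem' := p.zero_mem
          smul_mem' := by
            intro b w hw
            refine MonoidAlgebra.induction_on
              (motive := fun b => b • w ∈ p₀) b (fun g => hp₀ g w hw) ?_ ?_
            · intro u v hu hv
              rw [add_smul]; exact p₀.add_mem hu hv
            · intro r u hu
              rw [smul_assoc]; exact p₀.smul_mem r hu }
        rcases eq_bot_or_eq_top p' with h | h
        · left
          rw [eq_bot_iff]; intro z hz
          have h2 : z ∈ p' := hz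
          rw [h] at h2
          simpa using h2
        · right
          rw [eq_top_iff]; intro z _
          have h2 : z ∈ (⊤ : Submodule A ↥W) := trivial
          rw [← h] at h2
          exact h2
    -- the morphism given by multiplication by a
    let aMap : ↥W →ₗ[ℂ] ↥W := {
      toFun := fun w => a • w
      map_add' := fun u v => smul_add a u v
      map_smul' := fun c u => by
        apply Subtype.ext
        simp only [SetLike.val_smul, SetLike.val_smul_of_tower]
        exact smul_comm _ _ _ }
    let φ : VW ⟶ VW := {
      hom := FGModuleCat.ofHom aMap
      comm := by
        intro g
        have hcm : aMap.comp (ρW g) = (ρW g).comp aMap := by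
          refine LinearMap.ext fun w => ?_
          show a • ((MonoidAlgebra.of ℂ G g : A) • w) = (MonoidAlgebra.of ℂ G g : A) • (a • w)
          rw [smul_smul, smul_smul, ← hcentral]
        exact FGModuleCat.hom_ext hcm }
    -- φ is a scalar multiple of the identity
    have hid0 : (𝟙 VW : VW ⟶ VW) ≠ 0 := by
      intro h
      obtain ⟨u, v, huv⟩ := hnt
      apply huv
      have hz : ∀ z : ↥W, z = 0 := by
        intro z
        calc z = (𝟙 VW : VW ⟶ VW).hom z := rfl
          _ = (0 : VW ⟶ VW).hom z := by rw [h]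
          _ = 0 := by rw [Action.zero_hom]; rfl
      exact (hz u).trans (hz v).symm
    have hfr : Module.finrank ℂ (VW ⟶ VW) = 1 := by
      have h := FDRep.finrank_hom_simple_simple (k := ℂ) VW VW
      rw [if_pos ⟨Iso.refl _⟩] at h
      exact h
    obtain ⟨c, hcφ⟩ := (finrank_eq_one_iff_of_nonzero' (𝟙 VW : VW ⟶ VW) hid0).1 hfr φ
    -- compute traces
    have hsum : aMap = ∑ g : G, f g • (ρW g⁻¹ : ↥W →ₗ[ℂ] ↥W) := by
      refine LinearMap.ext fun w => ?_
      show a • w = _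
      rw [ha, LinearMap.sum_apply]
      rw [Finset.sum_smul]
      refine Finset.sum_congr rfl fun g _ => ?_
      rw [LinearMap.smul_apply, smul_assoc]
      rfl
    have hchar : ∀ y : G, VW.character y = trace ℂ ↥W (ρW y) := fun y => rfl
    have htrφ : trace ℂ ↥W aMap = ∑ g : G, f g * VW.character g⁻¹ := by
      rw [hsum, map_sum]
      refine Finset.sum_congr rfl fun g _ => ?_
      rw [map_smul, hchar, smul_eq_mul]
    have haMapc : aMap = c • LinearMap.id := by
      have h1 : φ.hom.hom.hom = aMap := rfl
      have h2 : (c • (𝟙 VW : VW ⟶ VW)).hom.hom.hom = aMap := by rw [hcφ]; exact h1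
      rw [Action.smul_hom] at h2
      rw [← h2]
      rfl
    have hfrW : (Module.finrank ℂ ↥W : ℂ) ≠ 0 := by
      have : 0 < Module.finrank ℂ ↥W := Module.finrank_pos
      exact_mod_cast Nat.pos_iff_ne_zero.1 this
    have hc0 : c = 0 := by
      have h3 : trace ℂ ↥W aMap = c * Module.finrank ℂ ↥W := by
        rw [haMapc, map_smul, trace_id, smul_eq_mul]
      rw [htrφ, hvan VW hVWs] at h3
      rcases mul_eq_zero.1 h3.symm with h | h
      · exact h
      · exact absurd h hfrW
    have haMap0 : aMap = 0 := by rw [haMapc, hc0, zero_smul]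
    have h5 : aMap ⟨x, hxW⟩ = 0 := by rw [haMap0]; rfl
    have h6 : a * x = ((aMap ⟨x, hxW⟩ : ↥W) : A) := rfl
    rw [h5] at h6
    simpa using h6
  -- conclude a = 0
  have hAzero : ∀ z : A, a * z = 0 := by
    intro z
    have hz : z ∈ (⊤ : Submodule A A) := trivial
    rw [← IsSemisimpleModule.sSup_simples_eq_top A A] at hz
    let K : Submodule A A := {
      carrier := {u | a * u = 0}
      zero_mem' := by simp
      add_mem' := fun {u} {v} hu hv => by
        show a * (u + v) = 0
        rw [mul_add]
        show a * u + a * v = 0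
        rw [hu, hv, add_zero]
      smul_mem' := fun b u hu => by
        show a * (b • u) = 0
        rw [smul_eq_mul, ← mul_assoc, hcentral b, mul_assoc, hu, mul_zero] }
    have hle : sSup {m : Submodule A A | IsSimpleModule A ↥m} ≤ K :=
      sSup_le fun W hW => fun z hz => hkill W hW z hz
    exact hle hz
  intro y
  have h0 := hAzero 1
  rw [mul_one] at h0
  have h1 : a.coeff y⁻¹ = (0 : MonoidAlgebra ℂ G).coeff y⁻¹ := by rw [h0]
  rw [ha, MonoidAlgebra.coeff_zero, Finsupp.coe_zero, Pi.zero_apply] at h1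
  have h2 : (∑ g : G, f g • MonoidAlgebra.single g⁻¹ (1:ℂ)).coeff y⁻¹
      = ∑ g : G, f g * (MonoidAlgebra.single g⁻¹ (1:ℂ)).coeff y⁻¹ := by
    rw [MonoidAlgebra.coeff_sum, Finsupp.finset_sum_apply]
    exact Finset.sum_congr rfl fun g _ => by rw [MonoidAlgebra.coeff_smul, Finsupp.smul_apply, smul_eq_mul]
  rw [h2] at h1
  have h3 : ∀ g : G, f g * (MonoidAlgebra.single g⁻¹ (1:ℂ)).coeff y⁻¹
      = if g = y then f g else 0 := by
    intro g
    rw [MonoidAlgebra.coeff_single, Finsupp.single_apply]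
    by_cases h : g = y
    · subst h; simp
    · have : ¬(g⁻¹ = y⁻¹) := fun hh => h (inv_injective hh)
      simp [h, this]
  rw [Finset.sum_congr rfl fun g _ => h3 g, Finset.sum_ite_eq' Finset.univ y f] at h1
  simpa using h1

end PartB

open LinearMap in
/-- let `G` be a finite group with irreducible complex characters
`χ 1, …, χ r`, and `L` an involutive anti-automorphism of `G` such that
`χ k (L g) = χ k g` for all `k` and `g`.  Then the class function
`g ↦ |{h : h⁻¹ L(h) = g}|` equals `Σ_k ε_k χ_k` with each `ε_k = ±1`. -/
theorem gelfand_stmt5 {G : Type} [Group G] [Fintype G] [DecidableEq G]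
    {r : ℕ} (χ : Fin r → G → ℂ)
    (hirr : ∀ k, ∃ V : FDRep ℂ G, Simple V ∧ χ k = V.character)
    (hall : ∀ V : FDRep ℂ G, Simple V → ∃ k, χ k = V.character)
    (hdist : Function.Injective χ)
    (L : G → G)
    (hanti : ∀ g h : G, L (g * h) = L h * L g) (hinv : ∀ g : G, L (L g) = g)
    (hLchar : ∀ (k : Fin r) (g : G), χ k (L g) = χ k g) :
    ∃ ε : Fin r → ℂ, (∀ k, ε k = 1 ∨ ε k = -1) ∧
      ∀ g : G, (Fintype.card {h : G // h⁻¹ * L h = g} : ℂ) = ∑ k, ε k * χ k g := by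
  classical
  have hc : (Fintype.card G : ℂ) ≠ 0 := Nat.cast_ne_zero.2 Fintype.card_ne_zero
  have hL1 : L 1 = 1 := by
    have h1 : L 1 * L 1 = L 1 := by rw [← hanti 1 1, mul_one]
    exact mul_eq_right.1 h1
  have hLinv : ∀ g : G, L g⁻¹ = (L g)⁻¹ := by
    intro g
    have : L g⁻¹ * L g = 1 := by rw [← hanti g g⁻¹, mul_inv_cancel, hL1]
    exact eq_inv_of_mul_eq_one_left this
  -- chosen representatives
  let V : Fin r → FDRep ℂ G := fun k => (hirr k).choose
  have hVs : ∀ k, Simple (V k) := fun k => (hirr k).choose_spec.1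
  have hVχ : ∀ k, χ k = (V k).character := fun k => (hirr k).choose_spec.2
  -- the indicators
  let ε : Fin r → ℂ := fun k => (Fintype.card G : ℂ)⁻¹ * ∑ h : G, χ k ((L h)⁻¹ * h)
  have hεpm : ∀ k, ε k = 1 ∨ ε k = -1 := by
    intro k
    haveI := hVs k
    have := partA (V k) L hanti hinv (fun g => by rw [← hVχ k]; exact hLchar k g)
    simpa only [← hVχ k] using this
  -- the counting function
  let N : G → ℂ := fun g => (Fintype.card {h : G // h⁻¹ * L h = g} : ℂ)
  have hNsum : ∀ F : G → ℂ, ∑ g : G, N g * F g = ∑ h : G, F (h⁻¹ * L h) := by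
    intro F
    have h1 : ∀ g : G, N g * F g
        = ∑ h ∈ Finset.univ.filter (fun h : G => h⁻¹ * L h = g), F (h⁻¹ * L h) := by
      intro g
      rw [Finset.sum_congr rfl (fun h hh => by
        rw [(Finset.mem_filter.1 hh).2])]
      rw [Finset.sum_const, nsmul_eq_mul]
      show (Fintype.card {h : G // h⁻¹ * L h = g} : ℂ) * F g = _
      rw [Fintype.card_subtype]
    rw [Finset.sum_congr rfl fun g _ => h1 g]
    exact Finset.sum_fiberwise _ _ _
  have hNclass : ∀ x g : G, N (x * g * x⁻¹) = N g := by
    intro x g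
    have e : {h : G // h⁻¹ * L h = x * g * x⁻¹} ≃ {h : G // h⁻¹ * L h = g} := by
      refine ⟨fun h => ⟨L x * h.1 * x, ?_⟩, fun h => ⟨(L x)⁻¹ * h.1 * x⁻¹, ?_⟩, ?_, ?_⟩
      · have hh := h.2
        have hval : L (L x * h.1 * x) = L x * L h.1 * x := by
          rw [hanti, hanti, hinv]
          group
        show (L x * h.1 * x)⁻¹ * L (L x * h.1 * x) = g
        rw [hval]
        calc (L x * h.1 * x)⁻¹ * (L x * L h.1 * x)
            = x⁻¹ * (h.1⁻¹ * L h.1) * x := by group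
          _ = x⁻¹ * (x * g * x⁻¹) * x := by rw [hh]
          _ = g := by group
      · have hh := h.2
        have hval : L ((L x)⁻¹ * h.1 * x⁻¹) = (L x)⁻¹ * L h.1 * x⁻¹ := by
          rw [← hLinv x, hanti, hanti, hinv]
          group
        show ((L x)⁻¹ * h.1 * x⁻¹)⁻¹ * L ((L x)⁻¹ * h.1 * x⁻¹) = x * g * x⁻¹
        rw [hval]
        calc ((L x)⁻¹ * h.1 * x⁻¹)⁻¹ * ((L x)⁻¹ * L h.1 * x⁻¹)
            = x * (h.1⁻¹ * L h.1) * x⁻¹ := by group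
          _ = x * g * x⁻¹ := by rw [hh]
      · intro h; apply Subtype.ext; show (L x)⁻¹ * (L x * h.1 * x) * x⁻¹ = h.1; group
      · intro h; apply Subtype.ext; show L x * ((L x)⁻¹ * h.1 * x⁻¹) * x = h.1; group
    have hcard : Fintype.card {h : G // h⁻¹ * L h = x * g * x⁻¹}
        = Fintype.card {h : G // h⁻¹ * L h = g} := Fintype.card_congr e
    show ((Fintype.card {h : G // h⁻¹ * L h = x * g * x⁻¹} : ℕ) : ℂ) = _
    rw [hcard]
  -- orthogonality
  have orth : ∀ k j : Fin r, ∑ g : G, χ k g * χ j g⁻¹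
      = if k = j then (Fintype.card G : ℂ) else 0 := by
    intro k j
    haveI := hVs k; haveI := hVs j
    have h := myorth (V k) (V j) hc
    have hiff : Nonempty (V k ≅ V j) ↔ k = j := by
      constructor
      · rintro ⟨i⟩
        apply hdist
        rw [hVχ k, hVχ j]
        exact FDRep.char_iso i
      · rintro rfl
        exact ⟨Iso.refl _⟩
    rw [hVχ k, hVχ j]
    by_cases hkj : k = j
    · rw [if_pos hkj]
      rw [if_pos (hiff.2 hkj)] at h
      field_simp at h ⊢
      try rw [mul_comm] at h
      exact h
    · rw [if_neg hkj]
      rw [if_neg (fun hn => hkj (hiff.1 hn))] at h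
      rcases mul_eq_zero.1 h with h' | h'
      · exact absurd h' (inv_ne_zero hc)
      · exact h'
  -- the difference function
  let f : G → ℂ := fun g => N g - ∑ k, ε k * χ k g
  have hfclass : ∀ x y : G, f (x * y * x⁻¹) = f y := by
    intro x y
    show N (x * y * x⁻¹) - ∑ k, ε k * χ k (x * y * x⁻¹) = N y - ∑ k, ε k * χ k y
    rw [hNclass x y]
    congr 1
    refine Finset.sum_congr rfl fun k _ => ?_
    congr 1
    rw [hVχ k]
    exact FDRep.char_conj (V k) y x
  have hvan : ∀ U : FDRep ℂ G, Simple U → ∑ g : G, f g * U.character g⁻¹ = 0 := by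
    intro U hU
    haveI := hU
    obtain ⟨j, hj⟩ := hall U hU
    have h1 : ∑ g : G, f g * U.character g⁻¹
        = (∑ g : G, N g * χ j g⁻¹) - ∑ g : G, (∑ k, ε k * χ k g) * χ j g⁻¹ := by
      rw [← Finset.sum_sub_distrib]
      refine Finset.sum_congr rfl fun g _ => ?_
      rw [← hj]
      show (N g - ∑ k, ε k * χ k g) * χ j g⁻¹ = _
      ring
    have h2 : ∑ g : G, N g * χ j g⁻¹ = ε j * (Fintype.card G : ℂ) := by
      rw [hNsum (fun g => χ j g⁻¹)]
      have h3 : ∀ h : G, χ j ((h⁻¹ * L h)⁻¹) = χ j ((L h)⁻¹ * h) := by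
        intro h
        rw [mul_inv_rev, inv_inv]
      rw [Finset.sum_congr rfl fun h _ => h3 h]
      show _ = ((Fintype.card G : ℂ)⁻¹ * ∑ h : G, χ j ((L h)⁻¹ * h)) * (Fintype.card G : ℂ)
      field_simp
    have h4 : ∑ g : G, (∑ k, ε k * χ k g) * χ j g⁻¹ = ε j * (Fintype.card G : ℂ) := by
      have h5 : ∀ g : G, (∑ k, ε k * χ k g) * χ j g⁻¹ = ∑ k, ε k * (χ k g * χ j g⁻¹) := by
        intro g; rw [Finset.sum_mul]; exact Finset.sum_congr rfl fun k _ => by ring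
      rw [Finset.sum_congr rfl fun g _ => h5 g, Finset.sum_comm]
      have h6 : ∀ k, ∑ g : G, ε k * (χ k g * χ j g⁻¹)
          = ε k * (if k = j then (Fintype.card G : ℂ) else 0) := by
        intro k
        rw [← Finset.mul_sum, orth k j]
      rw [Finset.sum_congr rfl fun k _ => h6 k]
      have h7 : ∀ k : Fin r, ε k * (if k = j then (Fintype.card G : ℂ) else 0)
          = if k = j then ε k * (Fintype.card G : ℂ) else 0 := by
        intro k; split <;> simp
      rw [Finset.sum_congr rfl fun k _ => h7 k,
        Finset.sum_ite_eq' Finset.univ j (fun k => ε k * (Fintype.card G : ℂ)),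
        if_pos (Finset.mem_univ j)]
    rw [h1, h2, h4, sub_self]
  have hzero := partB f hfclass hvan
  refine ⟨ε, hεpm, fun g => ?_⟩
  have h8 : N g - ∑ k, ε k * χ k g = 0 := hzero g
  exact sub_eq_zero.1 h8
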